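/- For every integer g ≥ 1 and every integer k with 2 ≤ k ≤ min(5, ⌊(3g−1)/2⌋), the strict inequalities 1 − 2/(6g−1) < a_{g,k} < 1 hold. -/

import Mathlib

open Nat Real Filter


/-- The piecewise quantity `D(g,k)` from the recurrence for normalized
2-correlators: `D(g,k)` depends on the residue of `k` mod 3, with `k = 3j-1`,
`k = 3j`, or `k = 3j+1` respectively. -/
noncomputable def Dterm (g k : ℕ) : ℚ :=
  if k % 3 = 2 then
    -- k = 3j - 1, with j = (k+1)/3
    ((6 * ((k + 1) / 3) - 1)‼ : ℚ) / (((k + 1) / 3)! : ℚ) *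
      (((g - 1)! : ℚ) / ((g - (k + 1) / 3)! : ℚ)) * ((g : ℚ) - 2 * ((k + 1) / 3))
  else if k % 3 = 0 then
    -- k = 3j, with j = k/3
    -2 * ((6 * (k / 3) + 1)‼ : ℚ) / ((k / 3)! : ℚ) *
      (((g - 1)! : ℚ) / ((g - 1 - k / 3)! : ℚ))
  else
    -- k = 3j + 1, with j = (k-1)/3
    2 * ((6 * ((k - 1) / 3) + 3)‼ : ℚ) / (((k - 1) / 3)! : ℚ) *
      (((g - 1)! : ℚ) / ((g - 1 - (k - 1) / 3)! : ℚ))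

/-- `a : ℕ → ℚ` is the sequence `(a_{g,k})_{0 ≤ k ≤ 3g-1}` of normalized
2-correlators: `a 0 = 1`, the recurrence
`a (k+1) - a k = ((6g-3-2k)‼/(6g-1)‼) · D(g,k)` for `0 ≤ k ≤ ⌊(3g-1)/2⌋ - 1`,
and the symmetry `a k = a (3g-1-k)` for `0 ≤ k ≤ 3g-1`. -/
def IsCorr (g : ℕ) (a : ℕ → ℚ) : Prop :=
  a 0 = 1 ∧
  (∀ k : ℕ, k + 1 ≤ (3 * g - 1) / 2 →
    a (k + 1) - a k = ((6 * g - 3 - 2 * k)‼ : ℚ) / ((6 * g - 1)‼ : ℚ) * Dterm g k) ∧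
  (∀ k : ℕ, k ≤ 3 * g - 1 → a k = a (3 * g - 1 - k))

/-- `R(g,j) = C(3g,3j)·C(g,j)/C(6g,6j)`. -/
noncomputable def R (g j : ℕ) : ℚ :=
  (((3 * g).choose (3 * j) : ℚ) * (g.choose j : ℚ)) / ((6 * g).choose (6 * j) : ℚ)

/-- Riemann zeta value `ζ(s) = Σ_{n ≥ 1} n⁻ˢ` as a real number. -/
noncomputable def zetaR (s : ℕ) : ℝ := ∑' n : ℕ, (1 : ℝ) / (n + 1) ^ s

/-- `V1(g) = Vol(Γ₁(g))`, the contribution of one-cylinder square-tiled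
surfaces with nonseparating waist curve to the Masur–Veech volume `Vol 𝒬_g`,
expressed via the sequence `a` of normalized 2-correlators. -/
noncomputable def V1 (a : ℕ → ℕ → ℚ) (g : ℕ) : ℝ :=
  zetaR (6 * g - 6) * ((4 * g - 4).choose (g - 1) : ℝ) *
    (2 / (3 ^ (g - 1) * 2 ^ (2 * g - 2))) *
    ∑ k ∈ Finset.range (3 * g - 3), ((6 * g - 6).choose (2 * k + 1) : ℝ) * (a (g - 1) k : ℝ)

/-- `S(g) = Σ_{g₁=1}^{g-1} C(g,g₁)·C(3g-4,3g₁-2)`. -/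
def S (g : ℕ) : ℕ :=
  ∑ g₁ ∈ Finset.Icc 1 (g - 1), g.choose g₁ * (3 * g - 4).choose (3 * g₁ - 2)

/-- `W(g) = 2·ζ(6g-6)·C(4g-4,g)·12⁻ᵍ·S(g)`, the total contribution of
one-cylinder square-tiled surfaces with separating waist curve. -/
noncomputable def W (g : ℕ) : ℝ :=
  2 * zetaR (6 * g - 6) * ((4 * g - 4).choose g : ℝ) * (12 : ℝ)⁻¹ ^ g * (S g : ℝ)


section Stmt16Aux

private lemma dfq_ne (n : ℕ) : ((n‼ : ℚ)) ≠ 0 :=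
  Nat.cast_ne_zero.mpr (Nat.doubleFactorial_pos n).ne'

private lemma dfq_pos (n : ℕ) : (0 : ℚ) < (n‼ : ℚ) :=
  Nat.cast_pos.mpr (Nat.doubleFactorial_pos n)

private lemma E11 (m : ℕ) : ((6*m+11)‼ : ℚ) = (6*(m:ℚ)+11) * ((6*m+9)‼ : ℚ) := by
  have h : 6*m+11 = (6*m+9)+2 := by omega
  rw [h, Nat.doubleFactorial_add_two]; push_cast; ring

private lemma E9 (m : ℕ) : ((6*m+9)‼ : ℚ) = (6*(m:ℚ)+9) * ((6*m+7)‼ : ℚ) := by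
  have h : 6*m+9 = (6*m+7)+2 := by omega
  rw [h, Nat.doubleFactorial_add_two]; push_cast; ring

private lemma E7 (m : ℕ) : ((6*m+7)‼ : ℚ) = (6*(m:ℚ)+7) * ((6*m+5)‼ : ℚ) := by
  have h : 6*m+7 = (6*m+5)+2 := by omega
  rw [h, Nat.doubleFactorial_add_two]; push_cast; ring

private lemma E5 (m : ℕ) : ((6*m+5)‼ : ℚ) = (6*(m:ℚ)+5) * ((6*m+3)‼ : ℚ) := by
  have h : 6*m+5 = (6*m+3)+2 := by omega
  rw [h, Nat.doubleFactorial_add_two]; push_cast; ring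

private lemma E3 (m : ℕ) : ((6*m+3)‼ : ℚ) = (6*(m:ℚ)+3) * ((6*m+1)‼ : ℚ) := by
  have h : 6*m+3 = (6*m+1)+2 := by omega
  rw [h, Nat.doubleFactorial_add_two]; push_cast; ring

private lemma fne (n : ℕ) : ((n ! : ℚ)) ≠ 0 := by positivity

private lemma Dt0 (m : ℕ) : Dterm (m+2) 0 = -2 := by
  simp [Dterm, Nat.doubleFactorial]; exact Nat.factorial_ne_zero _

private lemma Dt1 (m : ℕ) : Dterm (m+2) 1 = 6 := by
  simp [Dterm, Nat.doubleFactorial]; rw [div_self (fne _)]; ring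

private lemma Dt2 (m : ℕ) : Dterm (m+2) 2 = 15 * (m:ℚ) := by
  simp [Dterm, Nat.doubleFactorial]
  rw [div_self (fne _)]; norm_num

private lemma Dt3 (m : ℕ) : Dterm (m+2) 3 = -210 * ((m:ℚ)+1) := by
  simp [Dterm, Nat.doubleFactorial, Nat.factorial_succ]
  rw [mul_div_cancel_right₀ _ (fne m)]; ring

private lemma Dt4 (m : ℕ) : Dterm (m+2) 4 = 1890 * ((m:ℚ)+1) := by
  simp [Dterm, Nat.doubleFactorial, Nat.factorial_succ]
  rw [mul_div_cancel_right₀ _ (fne m)]; ring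

end Stmt16Aux

set_option maxHeartbeats 1600000 in
/-- for `2 ≤ k ≤ min(5, ⌊(3g-1)/2⌋)`,
`1 - 2/(6g-1) < a_{g,k} < 1`. -/
theorem stmt16 (g : ℕ) (hg : 1 ≤ g) (a : ℕ → ℚ) (ha : IsCorr g a)
    (k : ℕ) (hk2 : 2 ≤ k) (hk : k ≤ min 5 ((3 * g - 1) / 2)) :
    1 - 2 / (6 * (g : ℚ) - 1) < a k ∧ a k < 1 := by
  obtain ⟨h0, hrec, -⟩ := ha
  have hk5 : k ≤ 5 := hk.trans (min_le_left _ _)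
  have hkg : k ≤ (3 * g - 1) / 2 := hk.trans (min_le_right _ _)
  -- in all cases g ≥ 2
  have hg2 : 2 ≤ g := by omega
  obtain ⟨m, rfl⟩ : ∃ m, g = m + 2 := ⟨g - 2, by omega⟩
  set q : ℚ := (m : ℚ) with hq
  have hq0 : (0 : ℚ) ≤ q := Nat.cast_nonneg m
  have hgoal : 6 * (((m+2 : ℕ) : ℚ)) - 1 = 6*q+11 := by push_cast [hq]; ring
  rw [hgoal]
  have hD1 : (0:ℚ) < 6*q+11 := by positivity
  have hD2 : (0:ℚ) < 6*q+9 := by positivity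
  have hD3 : (0:ℚ) < 6*q+7 := by positivity
  have hD4 : (0:ℚ) < 6*q+5 := by positivity
  have hD5 : (0:ℚ) < 6*q+3 := by positivity
  have hB : ((6*m+1)‼ : ℚ) ≠ 0 := dfq_ne _
  have e0 : a 1 - a 0 = -2/(6*q+11) := by
    have e := hrec 0 (by omega)
    rw [show 6*(m+2)-3-2*0 = 6*m+9 from by omega,
        show 6*(m+2)-1 = 6*m+11 from by omega, Dt0,
        E11 m, E9 m, E7 m, E5 m, E3 m] at e
    rw [e]; field_simp [hB]; ring
  interval_cases k
  · -- k = 2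
    have e1 : a 2 - a 1 = 6/((6*q+11)*(6*q+9)) := by
      have e := hrec 1 (by omega)
      rw [show 6*(m+2)-3-2*1 = 6*m+7 from by omega,
          show 6*(m+2)-1 = 6*m+11 from by omega, Dt1,
          E11 m, E9 m, E7 m, E5 m, E3 m] at e
      rw [e]; field_simp [hB]; ring
    have hK : a 2 = 1 + (-12*q-12)/((6*q+11)*(6*q+9)) := by
      have h : a 2 = a 0 + (a 1 - a 0) + (a 2 - a 1) := by ring
      rw [h, e0, e1, h0]; field_simp; ring
    rw [hK]
    constructor
    · have hid : (1 + (-12*q-12)/((6*q+11)*(6*q+9))) - (1 - 2/(6*q+11))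
          = 6/((6*q+11)*(6*q+9)) := by field_simp; ring
      have hpos : (0:ℚ) < 6/((6*q+11)*(6*q+9)) := by positivity
      linarith
    · have hneg : (-12*q-12)/((6*q+11)*(6*q+9)) < 0 :=
        div_neg_of_neg_of_pos (by nlinarith) (by positivity)
      linarith
  · -- k = 3
    have hm1 : (1:ℚ) ≤ q := by
      rw [hq]; exact_mod_cast (by omega : 1 ≤ m)
    have e1 : a 2 - a 1 = 6/((6*q+11)*(6*q+9)) := by
      have e := hrec 1 (by omega)
      rw [show 6*(m+2)-3-2*1 = 6*m+7 from by omega,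
          show 6*(m+2)-1 = 6*m+11 from by omega, Dt1,
          E11 m, E9 m, E7 m, E5 m, E3 m] at e
      rw [e]; field_simp [hB]; ring
    have e2 : a 3 - a 2 = 15*q/((6*q+11)*(6*q+9)*(6*q+7)) := by
      have e := hrec 2 (by omega)
      rw [show 6*(m+2)-3-2*2 = 6*m+5 from by omega,
          show 6*(m+2)-1 = 6*m+11 from by omega, Dt2,
          E11 m, E9 m, E7 m, E5 m, E3 m] at e
      rw [e]; field_simp [hB]; ring
    have hK : a 3 = 1 + (-72*q^2-141*q-84)/((6*q+11)*(6*q+9)*(6*q+7)) := by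
      have h : a 3 = a 0 + (a 1 - a 0) + (a 2 - a 1) + (a 3 - a 2) := by ring
      rw [h, e0, e1, e2, h0]; field_simp; ring
    rw [hK]
    constructor
    · have hid : (1 + (-72*q^2-141*q-84)/((6*q+11)*(6*q+9)*(6*q+7))) - (1 - 2/(6*q+11))
          = (51*q+42)/((6*q+11)*(6*q+9)*(6*q+7)) := by field_simp; ring
      have hpos : (0:ℚ) < (51*q+42)/((6*q+11)*(6*q+9)*(6*q+7)) := by positivity
      linarith
    · have hneg : (-72*q^2-141*q-84)/((6*q+11)*(6*q+9)*(6*q+7)) < 0 :=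
        div_neg_of_neg_of_pos (by nlinarith) (by positivity)
      linarith
  · -- k = 4
    have hm1 : (1:ℚ) ≤ q := by
      rw [hq]; exact_mod_cast (by omega : 1 ≤ m)
    have e1 : a 2 - a 1 = 6/((6*q+11)*(6*q+9)) := by
      have e := hrec 1 (by omega)
      rw [show 6*(m+2)-3-2*1 = 6*m+7 from by omega,
          show 6*(m+2)-1 = 6*m+11 from by omega, Dt1,
          E11 m, E9 m, E7 m, E5 m, E3 m] at e
      rw [e]; field_simp [hB]; ring
    have e2 : a 3 - a 2 = 15*q/((6*q+11)*(6*q+9)*(6*q+7)) := by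
      have e := hrec 2 (by omega)
      rw [show 6*(m+2)-3-2*2 = 6*m+5 from by omega,
          show 6*(m+2)-1 = 6*m+11 from by omega, Dt2,
          E11 m, E9 m, E7 m, E5 m, E3 m] at e
      rw [e]; field_simp [hB]; ring
    have e3 : a 4 - a 3 = -210*(q+1)/((6*q+11)*(6*q+9)*(6*q+7)*(6*q+5)) := by
      have e := hrec 3 (by omega)
      rw [show 6*(m+2)-3-2*3 = 6*m+3 from by omega,
          show 6*(m+2)-1 = 6*m+11 from by omega, Dt3,
          E11 m, E9 m, E7 m, E5 m, E3 m] at e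
      rw [e]; field_simp [hB]; ring
    have hK : a 4 = 1 + (-432*q^3-1206*q^2-1419*q-630)/((6*q+11)*(6*q+9)*(6*q+7)*(6*q+5)) := by
      have h : a 4 = a 0 + (a 1 - a 0) + (a 2 - a 1) + (a 3 - a 2) + (a 4 - a 3) := by ring
      rw [h, e0, e1, e2, e3, h0]; field_simp; ring
    rw [hK]
    constructor
    · have hid : (1 + (-432*q^3-1206*q^2-1419*q-630)/((6*q+11)*(6*q+9)*(6*q+7)*(6*q+5)))
          - (1 - 2/(6*q+11))
          = (306*q^2+297*q)/((6*q+11)*(6*q+9)*(6*q+7)*(6*q+5)) := by field_simp; ring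
      have hpos : (0:ℚ) < (306*q^2+297*q)/((6*q+11)*(6*q+9)*(6*q+7)*(6*q+5)) :=
        div_pos (by nlinarith) (by positivity)
      linarith
    · have hneg : (-432*q^3-1206*q^2-1419*q-630)/((6*q+11)*(6*q+9)*(6*q+7)*(6*q+5)) < 0 :=
        div_neg_of_neg_of_pos (by nlinarith) (by positivity)
      linarith
  · -- k = 5
    have hm2 : (2:ℚ) ≤ q := by
      rw [hq]; exact_mod_cast (by omega : 2 ≤ m)
    have e1 : a 2 - a 1 = 6/((6*q+11)*(6*q+9)) := by
      have e := hrec 1 (by omega)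
      rw [show 6*(m+2)-3-2*1 = 6*m+7 from by omega,
          show 6*(m+2)-1 = 6*m+11 from by omega, Dt1,
          E11 m, E9 m, E7 m, E5 m, E3 m] at e
      rw [e]; field_simp [hB]; ring
    have e2 : a 3 - a 2 = 15*q/((6*q+11)*(6*q+9)*(6*q+7)) := by
      have e := hrec 2 (by omega)
      rw [show 6*(m+2)-3-2*2 = 6*m+5 from by omega,
          show 6*(m+2)-1 = 6*m+11 from by omega, Dt2,
          E11 m, E9 m, E7 m, E5 m, E3 m] at e
      rw [e]; field_simp [hB]; ring
    have e3 : a 4 - a 3 = -210*(q+1)/((6*q+11)*(6*q+9)*(6*q+7)*(6*q+5)) := by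
      have e := hrec 3 (by omega)
      rw [show 6*(m+2)-3-2*3 = 6*m+3 from by omega,
          show 6*(m+2)-1 = 6*m+11 from by omega, Dt3,
          E11 m, E9 m, E7 m, E5 m, E3 m] at e
      rw [e]; field_simp [hB]; ring
    have e4 : a 5 - a 4 = 1890*(q+1)/((6*q+11)*(6*q+9)*(6*q+7)*(6*q+5)*(6*q+3)) := by
      have e := hrec 4 (by omega)
      rw [show 6*(m+2)-3-2*4 = 6*m+1 from by omega,
          show 6*(m+2)-1 = 6*m+11 from by omega, Dt4,
          E11 m, E9 m, E7 m, E5 m, E3 m] at e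
      rw [e]; field_simp [hB]; ring
    have hK : a 5 = 1 + (-2592*q^4-8532*q^3-12132*q^2-6147*q)
        /((6*q+11)*(6*q+9)*(6*q+7)*(6*q+5)*(6*q+3)) := by
      have h : a 5 = a 0 + (a 1 - a 0) + (a 2 - a 1) + (a 3 - a 2) + (a 4 - a 3)
          + (a 5 - a 4) := by ring
      rw [h, e0, e1, e2, e3, e4, h0]; field_simp; ring
    rw [hK]
    constructor
    · have hid : (1 + (-2592*q^4-8532*q^3-12132*q^2-6147*q)
            /((6*q+11)*(6*q+9)*(6*q+7)*(6*q+5)*(6*q+3))) - (1 - 2/(6*q+11))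
          = (1836*q^3+2700*q^2+2781*q+1890)
            /((6*q+11)*(6*q+9)*(6*q+7)*(6*q+5)*(6*q+3)) := by field_simp; ring
      have hpos : (0:ℚ) < (1836*q^3+2700*q^2+2781*q+1890)
            /((6*q+11)*(6*q+9)*(6*q+7)*(6*q+5)*(6*q+3)) := by positivity
      linarith
    · have hneg : (-2592*q^4-8532*q^3-12132*q^2-6147*q)
            /((6*q+11)*(6*q+9)*(6*q+7)*(6*q+5)*(6*q+3)) < 0 :=
        div_neg_of_neg_of_pos (by nlinarith) (by positivity)
      linarith
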